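/- Let f : ℝ^d → ℝ be convex differentiable with minimizer x⋆, and let X, X̄ : (0,∞) → ℝ^d be differentiable with X'(t) = -h ∇f(X t) for a constant h > 0 and X̄'(t) = (X t - X̄ t)/t (Polyak–Ruppert averaging). Then V(t) = t (f(X̄ t) - f(x⋆)) + (1/(2h)) ‖X t - x⋆‖² is nonincreasing on (0,∞). Consequently f(X̄ t) - f(x⋆) ≤ V(t₀)/t for t ≥ t₀ > 0. -/

import Mathlib

open scoped RealInnerProductSpace
open Real Set

theorem polyak_ruppert_averaging_flow_rate
    (d : ℕ) (f : EuclideanSpace ℝ (Fin d) → ℝ) (hf : Differentiable ℝ f)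
    (hconv : ∀ x y, f y ≥ f x + ⟪gradient f x, y - x⟫)
    (xstar : EuclideanSpace ℝ (Fin d)) (hmin : ∀ y, f xstar ≤ f y)
    (h : ℝ) (hh : 0 < h)
    (X Xbar : ℝ → EuclideanSpace ℝ (Fin d))
    (hX : ∀ t ∈ Set.Ioi (0 : ℝ), HasDerivAt X (-(h • gradient f (X t))) t)
    (hXbar : ∀ t ∈ Set.Ioi (0 : ℝ),
      HasDerivAt Xbar ((1 / t) • (X t - Xbar t)) t)
    (V : ℝ → ℝ)
    (hV : ∀ t, V t = t * (f (Xbar t) - f xstar)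
        + (1 / (2 * h)) * ‖X t - xstar‖ ^ 2) :
    AntitoneOn V (Set.Ioi (0 : ℝ)) ∧
      ∀ t₀ t : ℝ, 0 < t₀ → t₀ ≤ t → f (Xbar t) - f xstar ≤ V t₀ / t := by
  -- derivative of V
  have key : ∀ t ∈ Set.Ioi (0 : ℝ), ∃ V', HasDerivAt V V' t ∧ V' ≤ 0 := by
    intro t ht
    have ht0 : (0 : ℝ) < t := ht
    have hfc : HasDerivAt (fun s => f (Xbar s))
        (⟪gradient f (Xbar t), (1 / t) • (X t - Xbar t)⟫) t := by
      have := ((hf (Xbar t)).hasGradientAt.hasFDerivAt).comp_hasDerivAt t (hXbar t ht)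
      simp only [Function.comp, InnerProductSpace.toDual_apply_apply] at this
      exact this
    have hnorm : HasDerivAt (fun s => ⟪X s - xstar, X s - xstar⟫)
        (⟪X t - xstar, -(h • gradient f (X t))⟫
          + ⟪-(h • gradient f (X t)), X t - xstar⟫) t := by
      have hXd : HasDerivAt (fun s => X s - xstar) (-(h • gradient f (X t))) t := by
        simpa using (hX t ht).sub_const xstar
      exact hXd.inner ℝ hXd
    have hVform : V = fun s => s * (f (Xbar s) - f xstar)
        + (1 / (2 * h)) * ⟪X s - xstar, X s - xstar⟫ := by
      funext s
      rw [hV s, real_inner_self_eq_norm_sq]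
    have hVd : HasDerivAt V
        ((1 * (f (Xbar t) - f xstar)
            + t * ⟪gradient f (Xbar t), (1 / t) • (X t - Xbar t)⟫)
          + (1 / (2 * h)) * (⟪X t - xstar, -(h • gradient f (X t))⟫
            + ⟪-(h • gradient f (X t)), X t - xstar⟫)) t := by
      rw [hVform]
      exact ((hasDerivAt_id t).mul (hfc.sub_const _)).add (hnorm.const_mul _)
    refine ⟨_, hVd, ?_⟩
    have h1 : f (X t) ≥ f (Xbar t) + ⟪gradient f (Xbar t), X t - Xbar t⟫ := hconv _ _
    have h2 : f xstar ≥ f (X t) + ⟪gradient f (X t), xstar - X t⟫ := hconv _ _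
    have e1 : t * ⟪gradient f (Xbar t), (1 / t) • (X t - Xbar t)⟫
        = ⟪gradient f (Xbar t), X t - Xbar t⟫ := by
      rw [real_inner_smul_right]
      field_simp
    have e2 : (1 / (2 * h)) * (⟪X t - xstar, -(h • gradient f (X t))⟫
          + ⟪-(h • gradient f (X t)), X t - xstar⟫)
        = -⟪gradient f (X t), X t - xstar⟫ := by
      rw [real_inner_comm (-(h • gradient f (X t)))]
      rw [inner_neg_left, real_inner_smul_left]
      field_simp
      ring
    rw [e1, e2]
    have h2' : f (X t) - f xstar ≤ ⟪gradient f (X t), X t - xstar⟫ := by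
      have : ⟪gradient f (X t), xstar - X t⟫ = -⟪gradient f (X t), X t - xstar⟫ := by
        rw [← inner_neg_right]; congr 1; abel
      linarith [h2, this.le, this.ge]
    linarith
  have hdiff : DifferentiableOn ℝ V (interior (Set.Ioi (0 : ℝ))) := by
    rw [interior_Ioi]
    intro t ht
    obtain ⟨V', hV', _⟩ := key t ht
    exact hV'.differentiableAt.differentiableWithinAt
  have hderiv : ∀ t ∈ interior (Set.Ioi (0 : ℝ)), deriv V t ≤ 0 := by
    rw [interior_Ioi]
    intro t ht
    obtain ⟨V', hV', hle⟩ := key t ht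
    rw [hV'.deriv]; exact hle
  have hcont : ContinuousOn V (Set.Ioi (0 : ℝ)) := by
    intro t ht
    obtain ⟨V', hV', _⟩ := key t ht
    exact hV'.continuousAt.continuousWithinAt
  have hanti : AntitoneOn V (Set.Ioi (0 : ℝ)) :=
    antitoneOn_of_deriv_nonpos (convex_Ioi 0) hcont hdiff hderiv
  refine ⟨hanti, fun t₀ t ht₀ htle => ?_⟩
  have ht : (0 : ℝ) < t := lt_of_lt_of_le ht₀ htle
  have hVt : V t ≤ V t₀ := hanti ht₀ ht htle
  have hnn : 0 ≤ (1 / (2 * h)) * ‖X t - xstar‖ ^ 2 := by positivity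
  have : t * (f (Xbar t) - f xstar) ≤ V t₀ := by
    have := hV t; nlinarith
  rw [div_eq_inv_mul, ← mul_le_mul_iff_right₀ ht]
  calc t * (f (Xbar t) - f xstar) ≤ V t₀ := this
    _ = t * (t⁻¹ * V t₀) := by field_simp
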